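/- For every n ≥ 1, the function f : [0,1/4] → [0,1] given by f(ε) = localPart(P^{n,ε}), the local part of n isotropic ε-PRBs, is continuous; moreover, there exist a finite partition of [0,1/4] into intervals I₁,…,I_m and real polynomials p₁,…,p_m each of degree at most n such that f(ε) = p_i(ε) whenever ε ∈ I_i. -/

import Mathlib

open Finset

/-- n-bit strings. -/
abbrev Bits (n : ℕ) := Fin n → Bool

/-- A bipartite conditional "box" on n-bit alphabets: `P x y u v` is the
probability of outputs `(x, y)` given inputs `(u, v)`. -/
abbrev Box (n : ℕ) := Bits n → Bits n → Bits n → Bits n → ℝ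

/-- `P` is a bipartite conditional probability distribution. -/
def IsBox {n : ℕ} (P : Box n) : Prop :=
  (∀ x y u v, 0 ≤ P x y u v) ∧
  (∀ u v, ∑ x : Bits n, ∑ y : Bits n, P x y u v = 1)

/-- `P` is non-signalling. -/
def NonSignalling {n : ℕ} (P : Box n) : Prop :=
  (∀ y v u u', ∑ x : Bits n, P x y u v = ∑ x : Bits n, P x y u' v) ∧
  (∀ x u v v', ∑ y : Bits n, P x y u v = ∑ y : Bits n, P x y u v')

/-- The local deterministic box given by response functions `f` (Alice) and `g` (Bob). -/
def detBox {n : ℕ} (f g : Bits n → Bits n) : Box n :=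
  fun x y u v => if x = f u ∧ y = g v then 1 else 0

/-- `P` is local deterministic. -/
def IsLocalDet {n : ℕ} (P : Box n) : Prop :=
  ∃ f g : Bits n → Bits n, P = detBox f g

/-- `P` is local: a convex combination of local deterministic boxes. -/
def IsLocal {n : ℕ} (P : Box n) : Prop :=
  ∃ w : (Bits n → Bits n) × (Bits n → Bits n) → ℝ,
    (∀ fg, 0 ≤ w fg) ∧ (∑ fg, w fg = 1) ∧
    (∀ x y u v, P x y u v =
      ∑ fg : (Bits n → Bits n) × (Bits n → Bits n), w fg * detBox fg.1 fg.2 x y u v)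

/-- The local part of `P`: the maximal weight `p` such that `P` is a convex
combination of a local box (weight `p`) and a non-signalling box (weight `1 - p`). -/
noncomputable def localPart {n : ℕ} (P : Box n) : ℝ :=
  sSup {p : ℝ | 0 ≤ p ∧ p ≤ 1 ∧
    ∃ PL PNS : Box n, IsBox PL ∧ IsLocal PL ∧ IsBox PNS ∧ NonSignalling PNS ∧
      ∀ x y u v, P x y u v = p * PL x y u v + (1 - p) * PNS x y u v}

/-- Single-copy isotropic ε-PRB entries. -/
noncomputable def isoPRB1 (ε : ℝ) (x y u v : Bool) : ℝ :=
  if xor x y = (u && v) then (1 - ε) / 2 else ε / 2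

/-- The system of n independent isotropic ε-PRBs. -/
noncomputable def isoPRB (n : ℕ) (ε : ℝ) : Box n :=
  fun x y u v => ∏ i : Fin n, isoPRB1 ε (x i) (y i) (u i) (v i)

/-- Single-copy maximally biased δ-PRB entries. -/
noncomputable def biasedPRB1 (δ : ℝ) (x y u v : Bool) : ℝ :=
  if u && v then
    match x, y with
    | false, false => 0
    | true,  false => 1 / 2 - δ / 2
    | false, true  => 1 / 2 + δ / 2
    | true,  true  => 0
  else
    match x, y with
    | false, false => 1 / 2 - δ / 2
    | true,  false => 0
    | false, true  => δ
    | true,  true  => 1 / 2 - δ / 2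

/-- The system of n independent maximally biased δ-PRBs. -/
noncomputable def biasedPRB (n : ℕ) (δ : ℝ) : Box n :=
  fun x y u v => ∏ i : Fin n, biasedPRB1 δ (x i) (y i) (u i) (v i)

/-! ### Basics -/

section Basics
variable {n : ℕ}

lemma prod_sum_bits (f : Fin n → Bool → ℝ) :
    ∑ x : Bits n, ∏ i, f i (x i) = ∏ i, ∑ b : Bool, f i b := by
  rw [Finset.prod_univ_sum, Fintype.piFinset_univ]

lemma sum2_bits_prod (f : Fin n → Bool → Bool → ℝ) :
    ∑ x : Bits n, ∑ y : Bits n, ∏ i, f i (x i) (y i)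
      = ∏ i, ∑ c : Bool, ∑ d : Bool, f i c d := by
  have h1 : ∀ x : Bits n, ∑ y : Bits n, ∏ i, f i (x i) (y i)
      = ∏ i, ∑ d : Bool, f i (x i) d := fun x => prod_sum_bits (fun i d => f i (x i) d)
  rw [Finset.sum_congr rfl (fun x _ => h1 x)]
  exact prod_sum_bits (fun i c => ∑ d : Bool, f i c d)

lemma isoPRB1_nonneg {ε : ℝ} (h0 : 0 ≤ ε) (h1 : ε ≤ 1) (x y u v : Bool) :
    0 ≤ isoPRB1 ε x y u v := by
  unfold isoPRB1; split <;> linarith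

lemma sum2_isoPRB1 (ε : ℝ) (u v : Bool) :
    ∑ c : Bool, ∑ d : Bool, isoPRB1 ε c d u v = 1 := by
  cases u <;> cases v <;> simp [isoPRB1] <;> ring

lemma sum_isoPRB1_left (ε : ℝ) (d u v : Bool) :
    ∑ c : Bool, isoPRB1 ε c d u v = 1 / 2 := by
  cases u <;> cases v <;> cases d <;> simp [isoPRB1] <;> ring

lemma sum_isoPRB1_right (ε : ℝ) (c u v : Bool) :
    ∑ d : Bool, isoPRB1 ε c d u v = 1 / 2 := by
  cases u <;> cases v <;> cases c <;> simp [isoPRB1] <;> ring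

lemma isoPRB_nonneg {ε : ℝ} (h0 : 0 ≤ ε) (h1 : ε ≤ 1) (x y u v : Bits n) :
    0 ≤ isoPRB n ε x y u v :=
  Finset.prod_nonneg fun i _ => isoPRB1_nonneg h0 h1 _ _ _ _

lemma isoPRB_isBox {ε : ℝ} (h0 : 0 ≤ ε) (h1 : ε ≤ 1) : IsBox (isoPRB n ε) := by
  refine ⟨fun x y u v => isoPRB_nonneg h0 h1 x y u v, fun u v => ?_⟩
  unfold isoPRB
  rw [sum2_bits_prod (fun i c d => isoPRB1 ε c d (u i) (v i))]
  exact Finset.prod_eq_one (fun i _ => sum2_isoPRB1 ε (u i) (v i))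

lemma isoPRB_nonSignalling (ε : ℝ) : NonSignalling (isoPRB n ε) := by
  constructor
  · intro y v u u'
    unfold isoPRB
    rw [prod_sum_bits (fun i c => isoPRB1 ε c (y i) (u i) (v i)),
        prod_sum_bits (fun i c => isoPRB1 ε c (y i) (u' i) (v i))]
    rw [Finset.prod_congr rfl (fun i _ => sum_isoPRB1_left ε (y i) (u i) (v i)),
        Finset.prod_congr rfl (fun i _ => sum_isoPRB1_left ε (y i) (u' i) (v i))]
  · intro x u v v'
    unfold isoPRB
    rw [prod_sum_bits (fun i d => isoPRB1 ε (x i) d (u i) (v i)),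
        prod_sum_bits (fun i d => isoPRB1 ε (x i) d (u i) (v' i))]
    rw [Finset.prod_congr rfl (fun i _ => sum_isoPRB1_right ε (x i) (u i) (v i)),
        Finset.prod_congr rfl (fun i _ => sum_isoPRB1_right ε (x i) (u i) (v' i))]

lemma detBox_sum (f g : Bits n → Bits n) (u v : Bits n) :
    ∑ x : Bits n, ∑ y : Bits n, detBox f g x y u v = 1 := by
  unfold detBox
  simp [ite_and, Finset.sum_ite_eq]

lemma detBox_isBox (f g : Bits n → Bits n) : IsBox (detBox f g) := by
  refine ⟨fun x y u v => ?_, detBox_sum f g⟩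
  unfold detBox; split <;> norm_num

lemma detBox_isLocal (f g : Bits n → Bits n) : IsLocal (detBox f g) := by
  classical
  refine ⟨fun fg => if fg = (f, g) then 1 else 0, fun fg => by by_cases h : fg = (f, g) <;> simp [h], by simp, ?_⟩
  intro x y u v
  rw [Finset.sum_eq_single (f, g)]
  · simp
  · intro fg _ hfg; simp [hfg]
  · simp

lemma isLocal_nonSignalling {P : Box n} (h : IsLocal P) : NonSignalling P := by
  obtain ⟨w, _, _, hid⟩ := h
  constructor
  · intro y v u u'
    have key : ∀ u₀ : Bits n, ∑ x : Bits n, P x y u₀ v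
        = ∑ fg : (Bits n → Bits n) × (Bits n → Bits n),
            w fg * (if y = fg.2 v then 1 else 0) := by
      intro u₀
      rw [Finset.sum_congr rfl (fun x _ => hid x y u₀ v), Finset.sum_comm]
      refine Finset.sum_congr rfl (fun fg _ => ?_)
      rw [← Finset.mul_sum]
      congr 1
      unfold detBox
      simp [ite_and, Finset.sum_ite_eq]
    rw [key u, key u']
  · intro x u v v'
    have key : ∀ v₀ : Bits n, ∑ y : Bits n, P x y u v₀
        = ∑ fg : (Bits n → Bits n) × (Bits n → Bits n),
            w fg * (if x = fg.1 u then 1 else 0) := by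
      intro v₀
      rw [Finset.sum_congr rfl (fun y _ => hid x y u v₀), Finset.sum_comm]
      refine Finset.sum_congr rfl (fun fg _ => ?_)
      rw [← Finset.mul_sum]
      congr 1
      unfold detBox
      simp [ite_and]
    rw [key v, key v']

end Basics

/-! ### The defining set of localPart, and the domination lemma -/

section SetS
variable {n : ℕ}

def SetS (P : Box n) : Set ℝ :=
  {p : ℝ | 0 ≤ p ∧ p ≤ 1 ∧
    ∃ PL PNS : Box n, IsBox PL ∧ IsLocal PL ∧ IsBox PNS ∧ NonSignalling PNS ∧
      ∀ x y u v, P x y u v = p * PL x y u v + (1 - p) * PNS x y u v}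

lemma localPart_eq (P : Box n) : localPart P = sSup (SetS P) := rfl

lemma SetS_bddAbove (P : Box n) : BddAbove (SetS P) :=
  ⟨1, fun _ hp => hp.2.1⟩

lemma zero_mem_SetS {P : Box n} (hB : IsBox P) (hNS : NonSignalling P) : 0 ∈ SetS P := by
  refine ⟨le_refl 0, zero_le_one, detBox id id, P, detBox_isBox id id, detBox_isLocal id id,
    hB, hNS, fun x y u v => by ring⟩

lemma one_mem_SetS_of_isLocal {P : Box n} (hB : IsBox P) (hL : IsLocal P) : 1 ∈ SetS P := by
  exact ⟨zero_le_one, le_refl 1, P, P, hB, hL, hB, isLocal_nonSignalling hL,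
    fun x y u v => by ring⟩

lemma localPart_nonneg {P : Box n} (hB : IsBox P) (hNS : NonSignalling P) :
    0 ≤ localPart P := by
  rw [localPart_eq]
  exact le_csSup (SetS_bddAbove P) (zero_mem_SetS hB hNS)

lemma localPart_le_one {P : Box n} (hB : IsBox P) (hNS : NonSignalling P) :
    localPart P ≤ 1 := by
  rw [localPart_eq]
  exact csSup_le ⟨0, zero_mem_SetS hB hNS⟩ (fun p hp => hp.2.1)

/-- The domination lemma: if `μ • P ≤ P'` pointwise, then any local weight achievable
for `P` is achievable for `P'` up to the factor `μ`. -/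
lemma dom_mem {P P' : Box n} (hB : IsBox P) (hB' : IsBox P') (hNS : NonSignalling P)
    (hNS' : NonSignalling P') {μ : ℝ} (hμ0 : 0 < μ) (hμ1 : μ ≤ 1)
    (hdom : ∀ x y u v, μ * P x y u v ≤ P' x y u v) :
    ∀ p ∈ SetS P, μ * p ∈ SetS P' := by
  intro p hp
  obtain ⟨hp0, hp1, PL, PNS, hPLB, hPLloc, hPNSB, hPNSns, hdec⟩ := hp
  by_cases hone : μ * p = 1
  · -- then μ = 1 and p = 1, and P' = P
    have hμ : μ = 1 := by nlinarith
    have hpe : p = 1 := by nlinarith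
    have hPP' : ∀ x y u v, P' x y u v = P x y u v := by
      intro x y u v
      have hslack : ∀ x y : Bits n, 0 ≤ P' x y u v - P x y u v := by
        intro x y; have := hdom x y u v; rw [hμ] at this; linarith
      have hzero : ∑ x : Bits n, ∑ y : Bits n, (P' x y u v - P x y u v) = 0 := by
        rw [Finset.sum_congr rfl (fun x _ => Finset.sum_sub_distrib _ _),
          Finset.sum_sub_distrib, hB.2 u v, hB'.2 u v]
        ring
      have : ∀ x' ∈ (Finset.univ : Finset (Bits n)), ∀ y' ∈ (Finset.univ : Finset (Bits n)),
          P' x' y' u v - P x' y' u v = 0 := by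
        have h1 := (Finset.sum_eq_zero_iff_of_nonneg
          (fun x _ => Finset.sum_nonneg (fun y _ => hslack x y))).1 hzero
        intro x' hx' y' hy'
        have h2 := (Finset.sum_eq_zero_iff_of_nonneg (fun y _ => hslack x' y)).1
          (h1 x' hx') y' hy'
        exact h2
      have := this x (Finset.mem_univ x) y (Finset.mem_univ y)
      linarith
    rw [hone]
    refine ⟨zero_le_one, le_refl 1, PL, PNS, hPLB, hPLloc, hPNSB, hPNSns, fun x y u v => ?_⟩
    rw [hPP', hdec x y u v, hpe]
  · have hlt : μ * p < 1 := lt_of_le_of_ne (by nlinarith) hone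
    have hpos : 0 < 1 - μ * p := by linarith
    set Q : Box n := fun x y u v => (P' x y u v - μ * p * PL x y u v) / (1 - μ * p) with hQ
    have hPLns : NonSignalling PL := isLocal_nonSignalling hPLloc
    have hQnonneg : ∀ x y u v, 0 ≤ Q x y u v := by
      intro x y u v
      have h1 := hdom x y u v
      have h2 := hdec x y u v
      have h3 := hPNSB.1 x y u v
      have h4 : 0 ≤ μ * ((1 - p) * PNS x y u v) :=
        mul_nonneg hμ0.le (mul_nonneg (by linarith) h3)
      have h5 : μ * p * PL x y u v + μ * ((1 - p) * PNS x y u v) ≤ P' x y u v := by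
        calc μ * p * PL x y u v + μ * ((1 - p) * PNS x y u v) = μ * P x y u v := by
              rw [h2]; ring
          _ ≤ P' x y u v := h1
      have : μ * p * PL x y u v ≤ P' x y u v := by linarith
      exact div_nonneg (sub_nonneg.2 this) (le_of_lt hpos)
    have hQsum : ∀ u v, ∑ x : Bits n, ∑ y : Bits n, Q x y u v = 1 := by
      intro u v
      rw [hQ]
      simp only [← Finset.sum_div, Finset.sum_sub_distrib, ← Finset.mul_sum]
      rw [hB'.2 u v, hPLB.2 u v]
      field_simp
    have hQns : NonSignalling Q := by
      constructor
      · intro y v u u'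
        rw [hQ]
        simp only [← Finset.sum_div, Finset.sum_sub_distrib, ← Finset.mul_sum]
        rw [hNS'.1 y v u u', hPLns.1 y v u u']
      · intro x u v v'
        rw [hQ]
        simp only [← Finset.sum_div, Finset.sum_sub_distrib, ← Finset.mul_sum]
        rw [hNS'.2 x u v v', hPLns.2 x u v v']
    refine ⟨by positivity, by nlinarith, PL, Q, hPLB, hPLloc, ⟨hQnonneg, hQsum⟩, hQns,
      fun x y u v => ?_⟩
    rw [hQ]
    field_simp
    ring
end SetS

/-! ### Ratio bounds -/

section Ratio
variable {n : ℕ}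

lemma localPart_dom {P P' : Box n} (hB : IsBox P) (hB' : IsBox P') (hNS : NonSignalling P)
    (hNS' : NonSignalling P') {μ : ℝ} (hμ0 : 0 < μ) (hμ1 : μ ≤ 1)
    (hdom : ∀ x y u v, μ * P x y u v ≤ P' x y u v) :
    μ * localPart P ≤ localPart P' := by
  rw [localPart_eq, localPart_eq]
  have hne : (SetS P).Nonempty := ⟨0, zero_mem_SetS hB hNS⟩
  have h : sSup (SetS P) ≤ sSup (SetS P') / μ := by
    refine csSup_le hne (fun p hp => ?_)
    rw [le_div_iff₀ hμ0, mul_comm]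
    exact le_csSup (SetS_bddAbove P') (dom_mem hB hB' hNS hNS' hμ0 hμ1 hdom p hp)
  calc μ * sSup (SetS P) ≤ μ * (sSup (SetS P') / μ) := by
        exact mul_le_mul_of_nonneg_left h hμ0.le
    _ = sSup (SetS P') := by field_simp

lemma isoPRB1_dom {a b μ : ℝ} (hμ0 : 0 ≤ μ) (h1 : μ * b ≤ a) (h2 : μ * (1 - b) ≤ 1 - a)
    (x y u v : Bool) : μ * isoPRB1 b x y u v ≤ isoPRB1 a x y u v := by
  unfold isoPRB1
  split <;> [skip; skip] <;> linarith

lemma isoPRB_dom {a b μ : ℝ} (hb0 : 0 ≤ b) (hb1 : b ≤ 1) (hμ0 : 0 ≤ μ)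
    (h1 : μ * b ≤ a) (h2 : μ * (1 - b) ≤ 1 - a) (x y u v : Bits n) :
    μ ^ n * isoPRB n b x y u v ≤ isoPRB n a x y u v := by
  unfold isoPRB
  have heq : μ ^ n * ∏ i : Fin n, isoPRB1 b (x i) (y i) (u i) (v i)
      = ∏ i : Fin n, (μ * isoPRB1 b (x i) (y i) (u i) (v i)) := by
    rw [Finset.prod_mul_distrib, Finset.prod_const]
    simp
  rw [heq]
  refine Finset.prod_le_prod (fun i _ => mul_nonneg hμ0 (isoPRB1_nonneg hb0 hb1 _ _ _ _))
    (fun i _ => isoPRB1_dom hμ0 h1 h2 _ _ _ _)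

lemma localPart_iso_ratio {a b μ : ℝ} (ha0 : 0 ≤ a) (ha1 : a ≤ 1) (hb0 : 0 ≤ b) (hb1 : b ≤ 1)
    (hμ0 : 0 < μ) (hμ1 : μ ≤ 1) (h1 : μ * b ≤ a) (h2 : μ * (1 - b) ≤ 1 - a) :
    μ ^ n * localPart (isoPRB n b) ≤ localPart (isoPRB n a) :=
  localPart_dom (isoPRB_isBox hb0 hb1) (isoPRB_isBox ha0 ha1) (isoPRB_nonSignalling b)
    (isoPRB_nonSignalling a) (pow_pos hμ0 n) (pow_le_one₀ hμ0.le hμ1)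
    (fun x y u v => isoPRB_dom hb0 hb1 hμ0.le h1 h2 x y u v)

end Ratio

/-! ### CHSH bound near 0 -/

section CHSH
variable {n : ℕ}

noncomputable def sgn (c d a b : Bool) : ℝ := if (xor c d) = (a && b) then 1 else -1

noncomputable def Fc (hn : 0 < n) (P : Box n) : ℝ :=
  ∑ a : Bool, ∑ b : Bool, ∑ x : Bits n, ∑ y : Bits n,
    sgn (x ⟨0, hn⟩) (y ⟨0, hn⟩) a b * P x y (fun i => if i = ⟨0, hn⟩ then a else false)
      (fun i => if i = ⟨0, hn⟩ then b else false)

lemma Fc_iso (hn : 0 < n) {ε : ℝ} :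
    Fc hn (isoPRB n ε) = 4 * (1 - 2 * ε) := by
  set i₀ : Fin n := ⟨0, hn⟩
  have key : ∀ a b : Bool,
      (∑ x : Bits n, ∑ y : Bits n, sgn (x i₀) (y i₀) a b
        * isoPRB n ε x y (fun i => if i = i₀ then a else false)
          (fun i => if i = i₀ then b else false)) = 1 - 2 * ε := by
    intro a b
    have hpt : ∀ x y : Bits n, sgn (x i₀) (y i₀) a b
        * isoPRB n ε x y (fun i => if i = i₀ then a else false)
          (fun i => if i = i₀ then b else false)
        = ∏ i : Fin n, ((if i = i₀ then sgn (x i) (y i) a b else 1)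
            * isoPRB1 ε (x i) (y i) (if i = i₀ then a else false)
              (if i = i₀ then b else false)) := by
      intro x y
      rw [Finset.prod_mul_distrib]
      congr 1
      rw [Finset.prod_ite_eq' Finset.univ i₀ (fun i => sgn (x i) (y i) a b)]
      simp
    rw [Finset.sum_congr rfl (fun x _ => Finset.sum_congr rfl (fun y _ => hpt x y)),
      sum2_bits_prod (fun i c d => (if i = i₀ then sgn c d a b else 1)
        * isoPRB1 ε c d (if i = i₀ then a else false) (if i = i₀ then b else false))]
    rw [Finset.prod_eq_single i₀ ?h1 ?h2]
    · simp only [if_pos rfl]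
      cases a <;> cases b <;> simp [sgn, isoPRB1] <;> ring
    · intro i _ hne
      simp only [if_neg hne]
      simpa using sum2_isoPRB1 ε false false
    · intro h; exact absurd (Finset.mem_univ i₀) h
  unfold Fc
  rw [Finset.sum_congr rfl (fun a _ => Finset.sum_congr rfl (fun b _ => key a b))]
  simp
  ring

lemma Fc_det (hn : 0 < n) (f g : Bits n → Bits n) : Fc hn (detBox f g) ≤ 2 := by
  set i₀ : Fin n := ⟨0, hn⟩
  have key : ∀ a b : Bool,
      (∑ x : Bits n, ∑ y : Bits n, sgn (x i₀) (y i₀) a b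
        * detBox f g x y (fun i => if i = i₀ then a else false)
          (fun i => if i = i₀ then b else false))
      = sgn (f (fun i => if i = i₀ then a else false) i₀)
          (g (fun i => if i = i₀ then b else false) i₀) a b := by
    intro a b
    unfold detBox
    simp [ite_and, mul_ite, mul_one, mul_zero, Finset.sum_ite_eq', Finset.sum_ite_eq]
  unfold Fc
  rw [Finset.sum_congr rfl (fun a _ => Finset.sum_congr rfl (fun b _ => key a b))]
  set A : Bool → Bool := fun a => f (fun i => if i = i₀ then a else false) i₀
  set B : Bool → Bool := fun b => g (fun i => if i = i₀ then b else false) i₀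
  have : (∑ a : Bool, ∑ b : Bool, sgn (A a) (B b) a b) ≤ 2 := by
    cases hAf : A false <;> cases hAt : A true <;> cases hBf : B false <;> cases hBt : B true <;>
      simp [sgn, hAf, hAt, hBf, hBt] <;> norm_num
  exact this

lemma Fc_box (hn : 0 < n) {P : Box n} (hB : IsBox P) : Fc hn P ≤ 4 := by
  unfold Fc
  have key : ∀ a b : Bool,
      (∑ x : Bits n, ∑ y : Bits n, sgn (x ⟨0, hn⟩) (y ⟨0, hn⟩) a b
        * P x y (fun i => if i = ⟨0, hn⟩ then a else false)
          (fun i => if i = ⟨0, hn⟩ then b else false)) ≤ 1 := by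
    intro a b
    calc (∑ x : Bits n, ∑ y : Bits n, sgn (x ⟨0, hn⟩) (y ⟨0, hn⟩) a b
        * P x y (fun i => if i = ⟨0, hn⟩ then a else false)
          (fun i => if i = ⟨0, hn⟩ then b else false))
        ≤ ∑ x : Bits n, ∑ y : Bits n,
            P x y (fun i => if i = ⟨0, hn⟩ then a else false)
              (fun i => if i = ⟨0, hn⟩ then b else false) := by
          refine Finset.sum_le_sum (fun x _ => Finset.sum_le_sum (fun y _ => ?_))
          have h0 := hB.1 x y (fun i => if i = ⟨0, hn⟩ then a else false)
            (fun i => if i = ⟨0, hn⟩ then b else false)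
          unfold sgn
          split <;> nlinarith
      _ = 1 := hB.2 _ _
  calc (∑ a : Bool, ∑ b : Bool, ∑ x : Bits n, ∑ y : Bits n,
      sgn (x ⟨0, hn⟩) (y ⟨0, hn⟩) a b * P x y _ _)
      ≤ ∑ a : Bool, ∑ b : Bool, (1 : ℝ) :=
        Finset.sum_le_sum (fun a _ => Finset.sum_le_sum (fun b _ => key a b))
    _ = 4 := by simp; norm_num

lemma sum_exchange {n : ℕ} {κ : Type*} [Fintype κ] (h : κ → Bool → Bool → Bits n → Bits n → ℝ) :
    ∑ a : Bool, ∑ b : Bool, ∑ x : Bits n, ∑ y : Bits n, ∑ k : κ, h k a b x y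
      = ∑ k : κ, ∑ a : Bool, ∑ b : Bool, ∑ x : Bits n, ∑ y : Bits n, h k a b x y := by
  calc ∑ a : Bool, ∑ b : Bool, ∑ x : Bits n, ∑ y : Bits n, ∑ k : κ, h k a b x y
      = ∑ a : Bool, ∑ b : Bool, ∑ x : Bits n, ∑ k : κ, ∑ y : Bits n, h k a b x y :=
        Finset.sum_congr rfl fun a _ => Finset.sum_congr rfl fun b _ =>
          Finset.sum_congr rfl fun x _ => Finset.sum_comm
    _ = ∑ a : Bool, ∑ b : Bool, ∑ k : κ, ∑ x : Bits n, ∑ y : Bits n, h k a b x y :=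
        Finset.sum_congr rfl fun a _ => Finset.sum_congr rfl fun b _ => Finset.sum_comm
    _ = ∑ a : Bool, ∑ k : κ, ∑ b : Bool, ∑ x : Bits n, ∑ y : Bits n, h k a b x y :=
        Finset.sum_congr rfl fun a _ => Finset.sum_comm
    _ = ∑ k : κ, ∑ a : Bool, ∑ b : Bool, ∑ x : Bits n, ∑ y : Bits n, h k a b x y :=
        Finset.sum_comm

lemma Fc_affine (hn : 0 < n) (p : ℝ) (A B : Box n) :
    Fc hn (fun x y u v => p * A x y u v + (1 - p) * B x y u v)
      = p * Fc hn A + (1 - p) * Fc hn B := by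
  unfold Fc
  have step : ∀ (a b : Bool) (x y : Bits n),
      sgn (x ⟨0, hn⟩) (y ⟨0, hn⟩) a b
        * (p * A x y (fun i => if i = ⟨0, hn⟩ then a else false)
              (fun i => if i = ⟨0, hn⟩ then b else false)
          + (1 - p) * B x y (fun i => if i = ⟨0, hn⟩ then a else false)
              (fun i => if i = ⟨0, hn⟩ then b else false))
      = p * (sgn (x ⟨0, hn⟩) (y ⟨0, hn⟩) a b
            * A x y (fun i => if i = ⟨0, hn⟩ then a else false)
              (fun i => if i = ⟨0, hn⟩ then b else false))
        + (1 - p) * (sgn (x ⟨0, hn⟩) (y ⟨0, hn⟩) a b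
            * B x y (fun i => if i = ⟨0, hn⟩ then a else false)
              (fun i => if i = ⟨0, hn⟩ then b else false)) := by
    intro a b x y; ring
  rw [Finset.sum_congr rfl fun a _ => Finset.sum_congr rfl fun b _ =>
    Finset.sum_congr rfl fun x _ => Finset.sum_congr rfl fun y _ => step a b x y]
  simp only [Finset.sum_add_distrib, ← Finset.mul_sum]

lemma chsh_bound (hn : 0 < n) {ε : ℝ} (hε0 : 0 ≤ ε) (hε1 : ε ≤ 1) :
    localPart (isoPRB n ε) ≤ 4 * ε := by
  rw [localPart_eq]
  refine csSup_le ⟨0, zero_mem_SetS (isoPRB_isBox hε0 hε1) (isoPRB_nonSignalling ε)⟩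
    (fun p hp => ?_)
  obtain ⟨hp0, hp1, PL, PNS, hPLB, hPLloc, hPNSB, hPNSns, hdec⟩ := hp
  have hPeq : isoPRB n ε = fun x y u v => p * PL x y u v + (1 - p) * PNS x y u v := by
    funext x y u v; exact hdec x y u v
  have hFiso := Fc_iso hn (ε := ε)
  rw [hPeq, Fc_affine hn p PL PNS] at hFiso
  have hFPL : Fc hn PL ≤ 2 := by
    obtain ⟨w, hw0, hw1, hwid⟩ := hPLloc
    have hPLeq : PL = fun x y u v => ∑ fg : (Bits n → Bits n) × (Bits n → Bits n),
        w fg * detBox fg.1 fg.2 x y u v := by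
      funext x y u v; exact hwid x y u v
    have hlin : Fc hn PL = ∑ fg : (Bits n → Bits n) × (Bits n → Bits n),
        w fg * Fc hn (detBox fg.1 fg.2) := by
      rw [hPLeq]
      unfold Fc
      have step : ∀ (a b : Bool) (x y : Bits n),
          sgn (x ⟨0, hn⟩) (y ⟨0, hn⟩) a b
            * (∑ fg : (Bits n → Bits n) × (Bits n → Bits n),
                w fg * detBox fg.1 fg.2 x y (fun i => if i = ⟨0, hn⟩ then a else false)
                  (fun i => if i = ⟨0, hn⟩ then b else false))
          = ∑ fg : (Bits n → Bits n) × (Bits n → Bits n),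
              w fg * (sgn (x ⟨0, hn⟩) (y ⟨0, hn⟩) a b
                * detBox fg.1 fg.2 x y (fun i => if i = ⟨0, hn⟩ then a else false)
                  (fun i => if i = ⟨0, hn⟩ then b else false)) := by
        intro a b x y
        rw [Finset.mul_sum]
        exact Finset.sum_congr rfl fun fg _ => by ring
      rw [Finset.sum_congr rfl fun a _ => Finset.sum_congr rfl fun b _ =>
        Finset.sum_congr rfl fun x _ => Finset.sum_congr rfl fun y _ => step a b x y]
      rw [sum_exchange]
      simp only [← Finset.mul_sum]
    rw [hlin]
    calc (∑ fg : (Bits n → Bits n) × (Bits n → Bits n), w fg * Fc hn (detBox fg.1 fg.2))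
        ≤ ∑ fg : (Bits n → Bits n) × (Bits n → Bits n), w fg * 2 :=
          Finset.sum_le_sum (fun fg _ =>
            mul_le_mul_of_nonneg_left (Fc_det hn fg.1 fg.2) (hw0 fg))
      _ = 2 := by rw [← Finset.sum_mul, hw1]; ring
  have hFPNS : Fc hn PNS ≤ 4 := Fc_box hn hPNSB
  nlinarith
end CHSH

/-! ### Continuity -/

section Continuity
variable {n : ℕ}

lemma localPart_iso_zero (hn : 0 < n) : localPart (isoPRB n 0) = 0 := by
  have h1 := chsh_bound hn (le_refl (0:ℝ)) zero_le_one
  have h2 := localPart_nonneg (P := isoPRB n 0) (isoPRB_isBox (le_refl (0:ℝ)) zero_le_one)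
    (isoPRB_nonSignalling 0)
  simp at h1
  linarith

lemma continuousOn_localPart_iso (hn : 0 < n) :
    ContinuousOn (fun ε : ℝ => localPart (isoPRB n ε)) (Set.Icc 0 (1/4)) := by
  set g : ℝ → ℝ := fun ε => localPart (isoPRB n ε) with hg
  intro ε₀ hε₀
  obtain ⟨h0, h4⟩ := hε₀
  have hIcc : ∀ ε ∈ Set.Icc (0:ℝ) (1/4), 0 ≤ ε ∧ ε ≤ 1 := by
    intro ε hε; exact ⟨hε.1, by linarith [hε.2]⟩
  rcases eq_or_lt_of_le h0 with hz | hpos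
  · -- ε₀ = 0
    have hz' : ε₀ = 0 := hz.symm
    subst hz'
    show Filter.Tendsto g (nhdsWithin 0 (Set.Icc 0 (1/4))) (nhds (g 0))
    have hg0 : g 0 = 0 := localPart_iso_zero hn
    rw [hg0]
    have htU : Filter.Tendsto (fun ε : ℝ => 4 * ε) (nhdsWithin 0 (Set.Icc 0 (1/4))) (nhds 0) := by
      have : Filter.Tendsto (fun ε : ℝ => 4 * ε) (nhds 0) (nhds (4 * 0)) :=
        (continuous_const.mul continuous_id).tendsto 0
      simpa using this.mono_left nhdsWithin_le_nhds
    refine tendsto_of_tendsto_of_tendsto_of_le_of_le' tendsto_const_nhds htU ?_ ?_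
    · filter_upwards [self_mem_nhdsWithin] with ε hε
      exact localPart_nonneg (isoPRB_isBox (hIcc ε hε).1 (hIcc ε hε).2) (isoPRB_nonSignalling ε)
    · filter_upwards [self_mem_nhdsWithin] with ε hε
      exact chsh_bound hn (hIcc ε hε).1 (hIcc ε hε).2
  · -- 0 < ε₀
    have h1ε₀ : (0:ℝ) < 1 - ε₀ := by linarith
    have hlow : ∀ ε ∈ Set.Icc (0:ℝ) (1/4), 0 < ε →
        (min (ε/ε₀) ((1-ε)/(1-ε₀)))^n * g ε₀ ≤ g ε := by
      intro ε hε hp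
      have h1ε : (0:ℝ) < 1 - ε := by linarith [hε.2]
      have hμ0 : 0 < min (ε/ε₀) ((1-ε)/(1-ε₀)) :=
        lt_min (div_pos hp hpos) (div_pos h1ε h1ε₀)
      have hμ1 : min (ε/ε₀) ((1-ε)/(1-ε₀)) ≤ 1 := by
        rcases le_total ε ε₀ with h | h
        · exact le_trans (min_le_left _ _) ((div_le_one hpos).2 h)
        · exact le_trans (min_le_right _ _) ((div_le_one h1ε₀).2 (by linarith))
      refine localPart_iso_ratio hε.1 (hIcc ε hε).2 h0 (by linarith) hμ0 hμ1 ?_ ?_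
      · have := min_le_left (ε/ε₀) ((1-ε)/(1-ε₀))
        calc min (ε/ε₀) ((1-ε)/(1-ε₀)) * ε₀ ≤ (ε/ε₀) * ε₀ :=
              mul_le_mul_of_nonneg_right this hpos.le
          _ = ε := by field_simp
      · have := min_le_right (ε/ε₀) ((1-ε)/(1-ε₀))
        calc min (ε/ε₀) ((1-ε)/(1-ε₀)) * (1-ε₀) ≤ ((1-ε)/(1-ε₀)) * (1-ε₀) :=
              mul_le_mul_of_nonneg_right this h1ε₀.le
          _ = 1-ε := by field_simp
    have hup : ∀ ε ∈ Set.Icc (0:ℝ) (1/4), 0 < ε →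
        g ε ≤ g ε₀ / (min (ε₀/ε) ((1-ε₀)/(1-ε)))^n := by
      intro ε hε hp
      have h1ε : (0:ℝ) < 1 - ε := by linarith [hε.2]
      have hμ0 : 0 < min (ε₀/ε) ((1-ε₀)/(1-ε)) :=
        lt_min (div_pos hpos hp) (div_pos h1ε₀ h1ε)
      have hμ1 : min (ε₀/ε) ((1-ε₀)/(1-ε)) ≤ 1 := by
        rcases le_total ε₀ ε with h | h
        · exact le_trans (min_le_left _ _) ((div_le_one hp).2 h)
        · exact le_trans (min_le_right _ _) ((div_le_one h1ε).2 (by linarith))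
      have hratio : (min (ε₀/ε) ((1-ε₀)/(1-ε)))^n * g ε ≤ g ε₀ := by
        refine localPart_iso_ratio h0 (by linarith) hε.1 (hIcc ε hε).2 hμ0 hμ1 ?_ ?_
        · have := min_le_left (ε₀/ε) ((1-ε₀)/(1-ε))
          calc min (ε₀/ε) ((1-ε₀)/(1-ε)) * ε ≤ (ε₀/ε) * ε :=
                mul_le_mul_of_nonneg_right this hp.le
            _ = ε₀ := by field_simp
        · have := min_le_right (ε₀/ε) ((1-ε₀)/(1-ε))
          calc min (ε₀/ε) ((1-ε₀)/(1-ε)) * (1-ε) ≤ ((1-ε₀)/(1-ε)) * (1-ε) :=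
                mul_le_mul_of_nonneg_right this h1ε.le
            _ = 1-ε₀ := by field_simp
      rw [le_div_iff₀ (pow_pos hμ0 n)]
      linarith [hratio]
    -- continuity of the bounding functions
    have cL : ContinuousAt (fun ε : ℝ => (min (ε/ε₀) ((1-ε)/(1-ε₀)))^n * g ε₀) ε₀ := by
      have c1 : ContinuousAt (fun ε : ℝ => ε/ε₀) ε₀ :=
        continuousAt_id.div continuousAt_const (ne_of_gt hpos)
      have c2 : ContinuousAt (fun ε : ℝ => (1-ε)/(1-ε₀)) ε₀ :=
        ((continuous_const.sub continuous_id).continuousAt).div continuousAt_const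
          (ne_of_gt h1ε₀)
      exact ((c1.min c2).pow n).mul continuousAt_const
    have hLval : (min (ε₀/ε₀) ((1-ε₀)/(1-ε₀)))^n = 1 := by
      rw [div_self (ne_of_gt hpos), div_self (ne_of_gt h1ε₀), min_self, one_pow]
    have cU : ContinuousAt (fun ε : ℝ => g ε₀ / (min (ε₀/ε) ((1-ε₀)/(1-ε)))^n) ε₀ := by
      have c1 : ContinuousAt (fun ε : ℝ => ε₀/ε) ε₀ :=
        continuousAt_const.div continuousAt_id (ne_of_gt hpos)
      have c2 : ContinuousAt (fun ε : ℝ => (1-ε₀)/(1-ε)) ε₀ :=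
        continuousAt_const.div ((continuous_const.sub continuous_id).continuousAt)
          (ne_of_gt h1ε₀)
      refine continuousAt_const.div ((c1.min c2).pow n) ?_
      simpa [hLval] using (one_ne_zero : (1:ℝ) ≠ 0)
    show Filter.Tendsto g (nhdsWithin ε₀ (Set.Icc 0 (1/4))) (nhds (g ε₀))
    have hevpos : ∀ᶠ ε in nhdsWithin ε₀ (Set.Icc 0 (1/4)), ε ∈ Set.Icc (0:ℝ) (1/4) ∧ 0 < ε := by
      refine Filter.Eventually.and self_mem_nhdsWithin ?_
      exact Filter.eventually_iff_exists_mem.2 ⟨Set.Ioi 0, mem_nhdsWithin_of_mem_nhds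
        (Ioi_mem_nhds hpos), fun ε hε => hε⟩
    refine tendsto_of_tendsto_of_tendsto_of_le_of_le'
      (g := fun ε => (min (ε/ε₀) ((1-ε)/(1-ε₀)))^n * g ε₀)
      (h := fun ε => g ε₀ / (min (ε₀/ε) ((1-ε₀)/(1-ε)))^n) ?_ ?_ ?_ ?_
    · have := cL.tendsto.mono_left (nhdsWithin_le_nhds
        (s := Set.Icc (0:ℝ) (1/4)) (a := ε₀))
      have hv : (min (ε₀/ε₀) ((1-ε₀)/(1-ε₀)))^n * g ε₀ = g ε₀ := by rw [hLval]; ring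
      rwa [hv] at this
    · have := cU.tendsto.mono_left (nhdsWithin_le_nhds
        (s := Set.Icc (0:ℝ) (1/4)) (a := ε₀))
      have hv : g ε₀ / (min (ε₀/ε₀) ((1-ε₀)/(1-ε₀)))^n = g ε₀ := by rw [hLval]; ring
      rwa [hv] at this
    · filter_upwards [hevpos] with ε hε
      exact hlow ε hε.1 hε.2
    · filter_upwards [hevpos] with ε hε
      exact hup ε hε.1 hε.2
end Continuity

/-! ### Abstract parametric LP representation -/

section LP
set_option maxHeartbeats 2000000
open Classical in
/-- The value of an LP `max ⟨c,w⟩ s.t. w ≥ 0, Aw ≤ b` (when feasible & compact) is,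
for some choice from a finite `b`-independent family of linear functionals,
that functional applied to `b`. -/
lemma lp_repr {ι κ : Type} [Fintype ι] [Fintype κ] [DecidableEq ι] [DecidableEq κ]
    (A : κ → ι → ℝ) (c : ι → ℝ) :
    ∃ (m : ℕ) (y : Fin m → κ → ℝ), ∀ b : κ → ℝ,
      {w : ι → ℝ | (∀ i, 0 ≤ w i) ∧ ∀ k, ∑ i, A k i * w i ≤ b k}.Nonempty →
      IsCompact {w : ι → ℝ | (∀ i, 0 ≤ w i) ∧ ∀ k, ∑ i, A k i * w i ≤ b k} →
      ∃ j : Fin m, IsGreatest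
        ((fun w => ∑ i, c i * w i) ''
          {w : ι → ℝ | (∀ i, 0 ≤ w i) ∧ ∀ k, ∑ i, A k i * w i ≤ b k})
        (∑ k, y j k * b k) := by
  classical
  set cst : ι ⊕ κ → ((ι → ℝ) →ₗ[ℝ] ℝ) := fun s =>
    match s with
    | Sum.inl i => -(LinearMap.proj i)
    | Sum.inr k => ∑ i, A k i • LinearMap.proj i with hcst
  have cst_inl : ∀ (i : ι) (w : ι → ℝ), cst (Sum.inl i) w = -(w i) := by
    intro i w; simp [hcst]
  have cst_inr : ∀ (k : κ) (w : ι → ℝ), cst (Sum.inr k) w = ∑ i, A k i * w i := by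
    intro k w; simp [hcst]
  set dotc : (ι → ℝ) →ₗ[ℝ] ℝ := ∑ i, c i • LinearMap.proj i with hdotc
  have dotc_apply : ∀ w : ι → ℝ, dotc w = ∑ i, c i * w i := by
    intro w; simp [hdotc]
  set bnd : (κ → ℝ) → ι ⊕ κ → ℝ := fun b s =>
    match s with
    | Sum.inl _ => 0
    | Sum.inr k => b k with hbnd
  set Phi : (S : Finset (ι ⊕ κ)) → ((ι → ℝ) →ₗ[ℝ] ({x // x ∈ S} → ℝ)) := fun S =>
    LinearMap.pi (fun s => cst s.1) with hPhi
  set rS : (S : Finset (ι ⊕ κ)) → ((κ → ℝ) →ₗ[ℝ] ({x // x ∈ S} → ℝ)) := fun S =>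
    LinearMap.pi (fun s =>
      match s.1 with
      | Sum.inl _ => (0 : (κ → ℝ) →ₗ[ℝ] ℝ)
      | Sum.inr k => LinearMap.proj k) with hrS
  set Psi : (S : Finset (ι ⊕ κ)) → (({x // x ∈ S} → ℝ) →ₗ[ℝ] (ι → ℝ)) := fun S =>
    if h : LinearMap.ker (Phi S) = ⊥ then
      Classical.choose ((Phi S).exists_leftInverse_of_injective h)
    else 0 with hPsi
  set phiS : (S : Finset (ι ⊕ κ)) → ((κ → ℝ) →ₗ[ℝ] ℝ) := fun S =>
    dotc.comp ((Psi S).comp (rS S)) with hphiS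
  set e : Fin (Fintype.card (Finset (ι ⊕ κ))) ≃ Finset (ι ⊕ κ) :=
    (Fintype.equivFin (Finset (ι ⊕ κ))).symm with he
  refine ⟨Fintype.card (Finset (ι ⊕ κ)),
    fun j k => phiS (e j) (fun k' => if k = k' then 1 else 0), ?_⟩
  intro b hne hcpt
  set Feas : Set (ι → ℝ) := {w | (∀ i, 0 ≤ w i) ∧ ∀ k, ∑ i, A k i * w i ≤ b k} with hFeas
  have feas_iff : ∀ w, w ∈ Feas ↔ ∀ s, cst s w ≤ bnd b s := by
    intro w
    constructor
    · rintro ⟨h1, h2⟩ s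
      cases s with
      | inl i => rw [cst_inl]; simpa [hbnd] using h1 i
      | inr k => rw [cst_inr]; simpa [hbnd] using h2 k
    · intro h
      refine ⟨fun i => by have := h (Sum.inl i); rw [cst_inl] at this; simpa [hbnd] using this,
        fun k => by have := h (Sum.inr k); rw [cst_inr] at this; simpa [hbnd] using this⟩
  set act : (ι → ℝ) → Finset (ι ⊕ κ) := fun w =>
    Finset.univ.filter (fun s => cst s w = bnd b s) with hact
  have act_mem : ∀ w s, s ∈ act w ↔ cst s w = bnd b s := by
    intro w s; rw [hact]; simp
  have hobjcont : ContinuousOn (fun w : ι → ℝ => ∑ i, c i * w i) Feas :=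
    (continuous_finset_sum _ (fun i _ => (continuous_const.mul (continuous_apply i)))).continuousOn
  obtain ⟨w₀, hw₀F, hw₀max⟩ := hcpt.exists_isMaxOn hne hobjcont
  have descent : ∀ (N : ℕ) (w : ι → ℝ), w ∈ Feas →
      ((Finset.univ \ act w).card ≤ N) →
      ∃ w' ∈ Feas, dotc w ≤ dotc w' ∧ LinearMap.ker (Phi (act w')) = ⊥ := by
    intro N
    induction N with
    | zero =>
      intro w hw hcard
      refine ⟨w, hw, le_refl _, ?_⟩
      have huniv : act w = Finset.univ := by
        have h1 : Finset.univ \ act w = ∅ := Finset.card_eq_zero.1 (Nat.le_zero.1 hcard)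
        exact Finset.Subset.antisymm (Finset.subset_univ _)
          (Finset.sdiff_eq_empty_iff_subset.1 h1)
      rw [Submodule.eq_bot_iff]
      intro d hd
      have hcomp : ∀ s : {x // x ∈ act w}, cst s.1 d = 0 := by
        intro s
        have h0 : Phi (act w) d = 0 := hd
        exact congrFun h0 s
      funext i
      have hmem : Sum.inl i ∈ act w := by rw [huniv]; exact Finset.mem_univ _
      have := hcomp ⟨Sum.inl i, hmem⟩
      rw [cst_inl] at this
      simpa using this
    | succ N ih =>
      intro w hw hcard
      by_cases hinj : LinearMap.ker (Phi (act w)) = ⊥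
      · exact ⟨w, hw, le_refl _, hinj⟩
      · obtain ⟨d, hdker, hdne⟩ := (Submodule.ne_bot_iff _).1 hinj
        have hdact : ∀ s ∈ act w, cst s d = 0 := by
          intro s hs
          have h0 : Phi (act w) d = 0 := LinearMap.mem_ker.1 hdker
          exact congrFun h0 ⟨s, hs⟩
        set d' : ι → ℝ := if 0 ≤ dotc d then d else -d with hd'
        have hd'ne : d' ≠ 0 := by
          rw [hd']
          by_cases h : 0 ≤ dotc d
          · rw [if_pos h]; exact hdne
          · rw [if_neg h]; simpa using hdne
        have hd'act : ∀ s ∈ act w, cst s d' = 0 := by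
          intro s hs; rw [hd']
          by_cases h : 0 ≤ dotc d
          · rw [if_pos h]; exact hdact s hs
          · rw [if_neg h, map_neg, hdact s hs]; ring
        have hd'obj : 0 ≤ dotc d' := by
          rw [hd']
          by_cases h : 0 ≤ dotc d
          · rw [if_pos h]; exact h
          · rw [if_neg h, map_neg]; linarith [lt_of_not_ge h]
        set T : Set ℝ := {t | w + t • d' ∈ Feas} with hT
        have h0T : (0 : ℝ) ∈ T := by
          rw [hT]; simp only [Set.mem_setOf_eq, zero_smul, add_zero]; exact hw
        have hTclosed : IsClosed T :=
          hcpt.isClosed.preimage (continuous_const.add (continuous_id.smul continuous_const))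
        have hd'norm : 0 < ‖d'‖ := norm_pos_iff.2 hd'ne
        have hTbdd : BddAbove T := by
          obtain ⟨M, hM⟩ := hcpt.isBounded.exists_norm_le
          refine ⟨(M + ‖w‖) / ‖d'‖, fun t ht => ?_⟩
          have h1 : ‖w + t • d'‖ ≤ M := hM _ ht
          have h2 : ‖t • d'‖ ≤ M + ‖w‖ := by
            have h3 : t • d' = (w + t • d') - w := by ring_nf
            rw [h3]
            calc ‖(w + t • d') - w‖ ≤ ‖w + t • d'‖ + ‖w‖ := norm_sub_le _ _
              _ ≤ M + ‖w‖ := by linarith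
          rw [norm_smul, Real.norm_eq_abs] at h2
          have h4 : t ≤ |t| := le_abs_self t
          rw [le_div_iff₀ hd'norm]
          calc t * ‖d'‖ ≤ |t| * ‖d'‖ := mul_le_mul_of_nonneg_right h4 hd'norm.le
            _ ≤ M + ‖w‖ := h2
        set tstar : ℝ := sSup T with htstar
        have htT : tstar ∈ T := hTclosed.csSup_mem ⟨0, h0T⟩ hTbdd
        have ht0 : 0 ≤ tstar := le_csSup hTbdd h0T
        set w' : ι → ℝ := w + tstar • d' with hw'
        have hw'F : w' ∈ Feas := htT
        have hobj' : dotc w ≤ dotc w' := by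
          rw [hw', map_add, map_smul, smul_eq_mul]
          nlinarith [mul_nonneg ht0 hd'obj]
        have hcstw' : ∀ s, cst s w' = cst s w + tstar * cst s d' := by
          intro s; rw [hw', map_add, map_smul, smul_eq_mul]
        have hsub : act w ⊆ act w' := by
          intro s hs
          rw [act_mem] at hs ⊢
          rw [hcstw' s, hs, hd'act s ((act_mem w s).2 hs)]
          ring
        have hnew : ∃ s, s ∈ act w' ∧ s ∉ act w := by
          by_contra hno
          push_neg at hno
          obtain ⟨i₁, _⟩ := Function.ne_iff.1 hd'ne
          have hσne : (Finset.univ : Finset (ι ⊕ κ)).Nonempty :=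
            ⟨Sum.inl i₁, Finset.mem_univ _⟩
          set f : ι ⊕ κ → ℝ := fun s =>
            if 0 < cst s d' ∧ s ∉ act w then (bnd b s - cst s w') / cst s d' else 1 with hf
          have hfdef : ∀ s, f s =
              if 0 < cst s d' ∧ s ∉ act w then (bnd b s - cst s w') / cst s d' else 1 :=
            fun s => rfl
          have hfpos : ∀ s, 0 < f s := by
            intro s
            rw [hfdef s]
            split
            · rename_i hcond
              refine div_pos ?_ hcond.1
              have hle : cst s w' ≤ bnd b s := (feas_iff w').1 hw'F s
              have hne' : cst s w' ≠ bnd b s := by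
                intro heq
                exact hcond.2 (hno s ((act_mem w' s).2 heq))
              cases lt_or_eq_of_le hle with
              | inl h => linarith
              | inr h => exact absurd h hne'
            · norm_num
          set δ : ℝ := Finset.univ.inf' hσne f with hδ
          have hδpos : 0 < δ := by
            rw [hδ, Finset.lt_inf'_iff]
            exact fun s _ => hfpos s
          have hfeast : tstar + δ ∈ T := by
            have : w + (tstar + δ) • d' ∈ Feas := by
              rw [feas_iff]
              intro s
              have hval : cst s (w + (tstar + δ) • d') = cst s w' + δ * cst s d' := by
                rw [map_add, map_smul, smul_eq_mul, hcstw' s]; ring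
              rw [hval]
              have hle : cst s w' ≤ bnd b s := (feas_iff w').1 hw'F s
              rcases le_or_gt (cst s d') 0 with hrate | hrate
              · nlinarith
              · by_cases hsact : s ∈ act w
                · rw [hd'act s hsact] at hrate; exact absurd hrate (lt_irrefl 0)
                · have hδle : δ ≤ f s := Finset.inf'_le _ (Finset.mem_univ s)
                  rw [hfdef s, if_pos ⟨hrate, hsact⟩] at hδle
                  have := (le_div_iff₀ hrate).1 hδle
                  linarith
            exact this
          have hcontr : tstar + δ ≤ tstar := le_csSup hTbdd hfeast
          linarith
        obtain ⟨s', hs'in, hs'out⟩ := hnew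
        have hcard' : (Finset.univ \ act w').card < (Finset.univ \ act w).card := by
          refine Finset.card_lt_card ⟨Finset.sdiff_subset_sdiff (Finset.Subset.refl _) hsub, ?_⟩
          intro hsub'
          have h1 : s' ∈ Finset.univ \ act w := Finset.mem_sdiff.2 ⟨Finset.mem_univ _, hs'out⟩
          have h2 := hsub' h1
          exact (Finset.mem_sdiff.1 h2).2 hs'in
        obtain ⟨w'', h1, h2, h3⟩ := ih w' hw'F (by omega)
        exact ⟨w'', h1, le_trans hobj' h2, h3⟩
  obtain ⟨w', hw'F, hobj, hker⟩ := descent (Finset.univ \ act w₀).card w₀ hw₀F (le_refl _)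
  have hmax' : ∀ z ∈ Feas, (∑ i, c i * z i) ≤ ∑ i, c i * w' i := by
    intro z hz
    have h1 : (∑ i, c i * z i) ≤ ∑ i, c i * w₀ i := hw₀max hz
    have h2 : dotc w₀ ≤ dotc w' := by
      rw [dotc_apply, dotc_apply]
      rw [dotc_apply, dotc_apply] at hobj
      exact hobj
    rw [dotc_apply, dotc_apply] at h2
    linarith
  set S : Finset (ι ⊕ κ) := act w' with hS
  refine ⟨e.symm S, ?_⟩
  have heS : e (e.symm S) = S := e.apply_symm_apply S
  have hPhiw' : Phi S w' = rS S b := by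
    funext s
    have hs : s.1 ∈ act w' := s.2
    have hval : cst s.1 w' = bnd b s.1 := (act_mem w' s.1).1 hs
    have hl : Phi S w' s = cst s.1 w' := rfl
    rw [hl, hval]
    rcases s with ⟨s, hsmem⟩
    cases s with
    | inl i => rfl
    | inr k => rfl
  have hPsiPhi : (Psi S).comp (Phi S) = LinearMap.id := by
    rw [hPsi]
    simp only
    rw [dif_pos hker]
    exact Classical.choose_spec ((Phi S).exists_leftInverse_of_injective hker)
  have hw'rec : Psi S (rS S b) = w' := by
    rw [← hPhiw']
    have := DFunLike.congr_fun hPsiPhi w'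
    simpa using this
  have hval : phiS S b = ∑ i, c i * w' i := by
    rw [hphiS]
    simp only [LinearMap.comp_apply]
    rw [hw'rec, dotc_apply]
  have hsumval : (∑ k, phiS (e (e.symm S)) (fun k' => if k = k' then 1 else 0) * b k)
      = phiS S b := by
    rw [heS]
    rw [LinearMap.pi_apply_eq_sum_univ (phiS S) b]
    refine Finset.sum_congr rfl (fun k _ => ?_)
    rw [smul_eq_mul]; ring
  constructor
  · refine ⟨w', hw'F, ?_⟩
    rw [hsumval, hval]
  · rintro v ⟨z, hz, rfl⟩
    rw [hsumval, hval]
    exact hmax' z hz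
end LP

/-! ### The localPart as an LP value -/

section Instance
variable {n : ℕ}

lemma sum_comm3 {α β γ : Type*} [Fintype α] [Fintype β] [Fintype γ] (f : α → β → γ → ℝ) :
    ∑ x : α, ∑ y : β, ∑ k : γ, f x y k = ∑ k : γ, ∑ x : α, ∑ y : β, f x y k := by
  calc ∑ x : α, ∑ y : β, ∑ k : γ, f x y k
      = ∑ x : α, ∑ k : γ, ∑ y : β, f x y k :=
        Finset.sum_congr rfl fun x _ => Finset.sum_comm
    _ = ∑ k : γ, ∑ x : α, ∑ y : β, f x y k := Finset.sum_comm

/-- weighted sums of deterministic boxes are non-signalling -/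
lemma ns_weighted_det (w : (Bits n → Bits n) × (Bits n → Bits n) → ℝ) :
    NonSignalling (fun x y u v => ∑ fg : (Bits n → Bits n) × (Bits n → Bits n),
      w fg * detBox fg.1 fg.2 x y u v) := by
  constructor
  · intro y v u u'
    have key : ∀ u₀ : Bits n, (∑ x : Bits n,
        ∑ fg : (Bits n → Bits n) × (Bits n → Bits n), w fg * detBox fg.1 fg.2 x y u₀ v)
        = ∑ fg : (Bits n → Bits n) × (Bits n → Bits n), w fg * (if y = fg.2 v then 1 else 0) := by
      intro u₀
      rw [Finset.sum_comm]
      refine Finset.sum_congr rfl (fun fg _ => ?_)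
      rw [← Finset.mul_sum]
      congr 1
      unfold detBox
      simp [ite_and, Finset.sum_ite_eq]
    rw [key u, key u']
  · intro x u v v'
    have key : ∀ v₀ : Bits n, (∑ y : Bits n,
        ∑ fg : (Bits n → Bits n) × (Bits n → Bits n), w fg * detBox fg.1 fg.2 x y u v₀)
        = ∑ fg : (Bits n → Bits n) × (Bits n → Bits n), w fg * (if x = fg.1 u then 1 else 0) := by
      intro v₀
      rw [Finset.sum_comm]
      refine Finset.sum_congr rfl (fun fg _ => ?_)
      rw [← Finset.mul_sum]
      congr 1
      unfold detBox
      simp [ite_and]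
    rw [key v, key v']

/-- the constraint matrix -/
noncomputable def Amat (n : ℕ) : (Bits n × Bits n × Bits n × Bits n) →
    ((Bits n → Bits n) × (Bits n → Bits n)) → ℝ :=
  fun k fg => detBox fg.1 fg.2 k.1 k.2.1 k.2.2.1 k.2.2.2

noncomputable def bvec (n : ℕ) (ε : ℝ) : (Bits n × Bits n × Bits n × Bits n) → ℝ :=
  fun k => isoPRB n ε k.1 k.2.1 k.2.2.1 k.2.2.2

lemma feas_sum_le_one {ε : ℝ} (hε0 : 0 ≤ ε) (hε1 : ε ≤ 1)
    {w : ((Bits n → Bits n) × (Bits n → Bits n)) → ℝ}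
    (hw : (∀ i, 0 ≤ w i) ∧ ∀ k, ∑ i, Amat n k i * w i ≤ bvec n ε k) :
    ∑ fg : (Bits n → Bits n) × (Bits n → Bits n), w fg ≤ 1 := by
  have key : ∀ u v : Bits n,
      (∑ x : Bits n, ∑ y : Bits n, ∑ fg : (Bits n → Bits n) × (Bits n → Bits n),
        Amat n (x, y, u, v) fg * w fg)
      = ∑ fg : (Bits n → Bits n) × (Bits n → Bits n), w fg := by
    intro u v
    rw [sum_comm3 (fun x y fg => Amat n (x, y, u, v) fg * w fg)]
    refine Finset.sum_congr rfl (fun fg _ => ?_)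
    have : (∑ x : Bits n, ∑ y : Bits n, Amat n (x, y, u, v) fg * w fg)
        = (∑ x : Bits n, ∑ y : Bits n, detBox fg.1 fg.2 x y u v) * w fg := by
      rw [Finset.sum_mul]
      refine Finset.sum_congr rfl (fun x _ => ?_)
      rw [Finset.sum_mul]
      exact Finset.sum_congr rfl (fun y _ => rfl)
    rw [this, detBox_sum fg.1 fg.2 u v, one_mul]
  have hsum : (∑ x : Bits n, ∑ y : Bits n, bvec n ε (x, y, (fun _ => false), (fun _ => false)))
      = 1 := (isoPRB_isBox hε0 hε1).2 _ _
  calc (∑ fg : (Bits n → Bits n) × (Bits n → Bits n), w fg)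
      = ∑ x : Bits n, ∑ y : Bits n, ∑ fg : (Bits n → Bits n) × (Bits n → Bits n),
          Amat n (x, y, (fun _ => false), (fun _ => false)) fg * w fg :=
        (key _ _).symm
    _ ≤ ∑ x : Bits n, ∑ y : Bits n, bvec n ε (x, y, (fun _ => false), (fun _ => false)) :=
        Finset.sum_le_sum (fun x _ => Finset.sum_le_sum (fun y _ => hw.2 _))
    _ = 1 := hsum

lemma feas_nonempty {ε : ℝ} (hε0 : 0 ≤ ε) (hε1 : ε ≤ 1) :
    {w : ((Bits n → Bits n) × (Bits n → Bits n)) → ℝ |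
      (∀ i, 0 ≤ w i) ∧ ∀ k, ∑ i, Amat n k i * w i ≤ bvec n ε k}.Nonempty := by
  refine ⟨0, fun i => le_refl 0, fun k => ?_⟩
  simp only [Pi.zero_apply, mul_zero, Finset.sum_const_zero]
  exact isoPRB_nonneg hε0 hε1 _ _ _ _

lemma feas_compact {ε : ℝ} (hε0 : 0 ≤ ε) (hε1 : ε ≤ 1) :
    IsCompact {w : ((Bits n → Bits n) × (Bits n → Bits n)) → ℝ |
      (∀ i, 0 ≤ w i) ∧ ∀ k, ∑ i, Amat n k i * w i ≤ bvec n ε k} := by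
  set F := {w : ((Bits n → Bits n) × (Bits n → Bits n)) → ℝ |
      (∀ i, 0 ≤ w i) ∧ ∀ k, ∑ i, Amat n k i * w i ≤ bvec n ε k} with hF
  have hclosed : IsClosed F := by
    have h1 : F = (⋂ i, {w : ((Bits n → Bits n) × (Bits n → Bits n)) → ℝ | 0 ≤ w i}) ∩
        ⋂ k, {w : ((Bits n → Bits n) × (Bits n → Bits n)) → ℝ |
          ∑ i, Amat n k i * w i ≤ bvec n ε k} := by
      ext w
      simp [hF, Set.mem_iInter]
    rw [h1]
    refine IsClosed.inter (isClosed_iInter (fun i => ?_)) (isClosed_iInter (fun k => ?_))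
    · exact isClosed_le continuous_const (continuous_apply i)
    · exact isClosed_le (continuous_finset_sum _
        (fun i _ => continuous_const.mul (continuous_apply i))) continuous_const
  have hsubset : F ⊆ Set.pi Set.univ (fun _ => Set.Icc (0:ℝ) 1) := by
    intro w hw
    rw [Set.mem_pi]
    intro fg _
    refine ⟨hw.1 fg, ?_⟩
    have h1 : w fg ≤ ∑ fg' : (Bits n → Bits n) × (Bits n → Bits n), w fg' :=
      Finset.single_le_sum (fun i _ => hw.1 i) (Finset.mem_univ fg)
    exact le_trans h1 (feas_sum_le_one hε0 hε1 hw)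
  exact IsCompact.of_isClosed_subset (isCompact_univ_pi (fun _ => isCompact_Icc))
    hclosed hsubset

lemma localPart_eq_lp_value {ε : ℝ} (hε0 : 0 ≤ ε) (hε1 : ε ≤ 1) {v : ℝ}
    (hv : IsGreatest ((fun w => ∑ i, (1:ℝ) * w i) ''
      {w : ((Bits n → Bits n) × (Bits n → Bits n)) → ℝ |
        (∀ i, 0 ≤ w i) ∧ ∀ k, ∑ i, Amat n k i * w i ≤ bvec n ε k}) v) :
    localPart (isoPRB n ε) = v := by
  have hbox := isoPRB_isBox (n := n) hε0 hε1
  have hns := isoPRB_nonSignalling (n := n) ε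
  have hSne : (SetS (isoPRB n ε)).Nonempty := ⟨0, zero_mem_SetS hbox hns⟩
  -- every p in SetS is at most v
  have hub : ∀ p ∈ SetS (isoPRB n ε), p ≤ v := by
    intro p hp
    obtain ⟨hp0, hp1, PL, PNS, hPLB, hPLloc, hPNSB, hPNSns, hdec⟩ := hp
    obtain ⟨ω, hω0, hω1, hωid⟩ := hPLloc
    set w : ((Bits n → Bits n) × (Bits n → Bits n)) → ℝ := fun fg => p * ω fg with hwdef
    have hwF : w ∈ {w : ((Bits n → Bits n) × (Bits n → Bits n)) → ℝ |
        (∀ i, 0 ≤ w i) ∧ ∀ k, ∑ i, Amat n k i * w i ≤ bvec n ε k} := by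
      constructor
      · intro i; exact mul_nonneg hp0 (hω0 i)
      · rintro ⟨x, y, u, vv⟩
        have h1 : (∑ i : (Bits n → Bits n) × (Bits n → Bits n), Amat n (x, y, u, vv) i * w i)
            = p * PL x y u vv := by
          rw [hωid x y u vv, Finset.mul_sum]
          refine Finset.sum_congr rfl (fun fg _ => ?_)
          rw [hwdef]
          unfold Amat
          ring
        rw [h1]
        have h2 := hdec x y u vv
        have h3 := hPNSB.1 x y u vv
        unfold bvec
        simp only
        nlinarith
    have hpv : (∑ i : (Bits n → Bits n) × (Bits n → Bits n), (1:ℝ) * w i) = p := by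
      rw [hwdef]
      simp only [one_mul]
      rw [← Finset.mul_sum, hω1, mul_one]
    have := hv.2 ⟨w, hwF, hpv⟩
    linarith
  -- v belongs to SetS
  have hvmem : v ∈ SetS (isoPRB n ε) := by
    obtain ⟨w, hwF, hwv⟩ := hv.1
    have hv0 : 0 ≤ v := by
      rw [← hwv]
      exact Finset.sum_nonneg (fun i _ => by
        rw [one_mul]; exact hwF.1 i)
    have hsumw : (∑ fg : (Bits n → Bits n) × (Bits n → Bits n), w fg) = v := by
      rw [← hwv]
      exact Finset.sum_congr rfl (fun fg _ => (one_mul _).symm)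
    have hv1 : v ≤ 1 := by
      rw [← hsumw]; exact feas_sum_le_one hε0 hε1 hwF
    set L : Box n := fun x y u vv => ∑ fg : (Bits n → Bits n) × (Bits n → Bits n),
      w fg * detBox fg.1 fg.2 x y u vv with hL
    have hLnonneg : ∀ x y u vv, 0 ≤ L x y u vv := by
      intro x y u vv
      exact Finset.sum_nonneg (fun fg _ => mul_nonneg (hwF.1 fg) ((detBox_isBox fg.1 fg.2).1 _ _ _ _))
    have hLle : ∀ x y u vv, L x y u vv ≤ isoPRB n ε x y u vv := by
      intro x y u vv
      have := hwF.2 (x, y, u, vv)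
      unfold Amat bvec at this
      simp only at this
      calc L x y u vv = ∑ fg : (Bits n → Bits n) × (Bits n → Bits n),
          detBox fg.1 fg.2 x y u vv * w fg := by
            rw [hL]; exact Finset.sum_congr rfl (fun fg _ => by ring)
        _ ≤ _ := this
    have hLsum : ∀ u vv : Bits n, (∑ x : Bits n, ∑ y : Bits n, L x y u vv) = v := by
      intro u vv
      rw [hL]
      simp only
      rw [sum_comm3 (fun x y fg => w fg * detBox fg.1 fg.2 x y u vv)]
      rw [← hsumw]
      refine Finset.sum_congr rfl (fun fg _ => ?_)
      have : (∑ x : Bits n, ∑ y : Bits n, w fg * detBox fg.1 fg.2 x y u vv)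
          = w fg * ∑ x : Bits n, ∑ y : Bits n, detBox fg.1 fg.2 x y u vv := by
        rw [Finset.mul_sum]
        exact Finset.sum_congr rfl (fun x _ => by rw [Finset.mul_sum])
      rw [this, detBox_sum, mul_one]
    have hLns : NonSignalling L := ns_weighted_det w
    by_cases hv0' : v = 0
    · rw [hv0']; exact zero_mem_SetS hbox hns
    have hvpos : 0 < v := lt_of_le_of_ne hv0 (Ne.symm hv0')
    -- the local box
    set PL : Box n := fun x y u vv => L x y u vv / v with hPL
    have hPLB : IsBox PL := by
      constructor
      · intro x y u vv; exact div_nonneg (hLnonneg x y u vv) hv0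
      · intro u vv
        rw [hPL]
        simp only [← Finset.sum_div]
        rw [hLsum u vv]
        field_simp
    have hPLloc : IsLocal PL := by
      refine ⟨fun fg => w fg / v, fun fg => div_nonneg (hwF.1 fg) hv0, ?_, ?_⟩
      · rw [← Finset.sum_div, hsumw]; field_simp
      · intro x y u vv
        rw [hPL, hL]
        simp only [← Finset.sum_div]
        rw [Finset.sum_div]
        exact Finset.sum_congr rfl (fun fg _ => by ring)
    by_cases hv1' : v = 1
    · -- slack is zero pointwise
      have hLeq : ∀ x y u vv, L x y u vv = isoPRB n ε x y u vv := by
        intro x y u vv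
        have hzero : ∀ u₀ v₀ : Bits n,
            (∑ x' : Bits n, ∑ y' : Bits n, (isoPRB n ε x' y' u₀ v₀ - L x' y' u₀ v₀)) = 0 := by
          intro u₀ v₀
          rw [Finset.sum_congr rfl (fun x' (_ : x' ∈ Finset.univ) => Finset.sum_sub_distrib _ _),
            Finset.sum_sub_distrib, hbox.2 u₀ v₀, hLsum u₀ v₀, hv1']
          ring
        have h1 := (Finset.sum_eq_zero_iff_of_nonneg (fun x' _ => Finset.sum_nonneg
          (fun y' _ => sub_nonneg.2 (hLle x' y' u vv)))).1 (hzero u vv) x (Finset.mem_univ x)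
        have h2 := (Finset.sum_eq_zero_iff_of_nonneg
          (fun y' _ => sub_nonneg.2 (hLle x y' u vv))).1 h1 y (Finset.mem_univ y)
        linarith
      refine ⟨hv0, le_of_eq hv1', PL, isoPRB n ε, hPLB, hPLloc, hbox, hns, fun x y u vv => ?_⟩
      rw [hPL]
      simp only
      rw [hLeq x y u vv, hv1']
      field_simp
      ring
    · have hvlt : v < 1 := lt_of_le_of_ne hv1 hv1'
      have hpos1 : 0 < 1 - v := by linarith
      set PNS : Box n := fun x y u vv => (isoPRB n ε x y u vv - L x y u vv) / (1 - v) with hPNS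
      have hPNSB : IsBox PNS := by
        constructor
        · intro x y u vv
          exact div_nonneg (sub_nonneg.2 (hLle x y u vv)) hpos1.le
        · intro u vv
          rw [hPNS]
          simp only [← Finset.sum_div, Finset.sum_sub_distrib]
          rw [hbox.2 u vv, hLsum u vv]
          field_simp
      have hPNSns : NonSignalling PNS := by
        constructor
        · intro y vv u u'
          rw [hPNS]
          simp only [← Finset.sum_div, Finset.sum_sub_distrib]
          rw [hns.1 y vv u u', hLns.1 y vv u u']
        · intro x u vv vv'
          rw [hPNS]
          simp only [← Finset.sum_div, Finset.sum_sub_distrib]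
          rw [hns.2 x u vv vv', hLns.2 x u vv vv']
      refine ⟨hv0, hv1, PL, PNS, hPLB, hPLloc, hPNSB, hPNSns, fun x y u vv => ?_⟩
      rw [hPNS, hPL]
      simp only
      field_simp
      ring
  rw [localPart_eq]
  exact le_antisymm (csSup_le hSne hub) (le_csSup (SetS_bddAbove _) hvmem)

end Instance

/-! ### Polynomials for the isotropic box entries -/

section Poly
open Polynomial

noncomputable def isoPoly1 (x y u v : Bool) : Polynomial ℝ :=
  if xor x y = (u && v) then Polynomial.C (1/2) * (1 - Polynomial.X)
  else Polynomial.C (1/2) * Polynomial.X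

lemma isoPoly1_eval (ε : ℝ) (x y u v : Bool) :
    (isoPoly1 x y u v).eval ε = isoPRB1 ε x y u v := by
  unfold isoPoly1 isoPRB1
  split <;> simp <;> ring

lemma isoPoly1_deg (x y u v : Bool) : (isoPoly1 x y u v).natDegree ≤ 1 := by
  unfold isoPoly1
  split
  · refine le_trans (natDegree_mul_le) ?_
    have h1 : (Polynomial.C (1/2) : Polynomial ℝ).natDegree = 0 := natDegree_C _
    have h2 : ((1 : Polynomial ℝ) - Polynomial.X).natDegree ≤ 1 := by
      refine le_trans (natDegree_sub_le _ _) ?_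
      simp
    omega
  · refine le_trans (natDegree_mul_le) ?_
    have h1 : (Polynomial.C (1/2) : Polynomial ℝ).natDegree = 0 := natDegree_C _
    have h2 : (Polynomial.X : Polynomial ℝ).natDegree ≤ 1 := le_of_eq natDegree_X
    omega

noncomputable def isoPolyK (n : ℕ) (k : Bits n × Bits n × Bits n × Bits n) : Polynomial ℝ :=
  ∏ i : Fin n, isoPoly1 (k.1 i) (k.2.1 i) (k.2.2.1 i) (k.2.2.2 i)

lemma isoPolyK_eval {n : ℕ} (ε : ℝ) (k : Bits n × Bits n × Bits n × Bits n) :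
    (isoPolyK n k).eval ε = bvec n ε k := by
  unfold isoPolyK bvec isoPRB
  rw [Polynomial.eval_prod]
  exact Finset.prod_congr rfl (fun i _ => isoPoly1_eval ε _ _ _ _)

lemma isoPolyK_deg {n : ℕ} (k : Bits n × Bits n × Bits n × Bits n) :
    (isoPolyK n k).natDegree ≤ n := by
  unfold isoPolyK
  refine le_trans (natDegree_prod_le _ _) ?_
  calc (∑ i : Fin n, (isoPoly1 (k.1 i) (k.2.1 i) (k.2.2.1 i) (k.2.2.2 i)).natDegree)
      ≤ ∑ _i : Fin n, 1 := Finset.sum_le_sum (fun i _ => isoPoly1_deg _ _ _ _)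
    _ = n := by simp

end Poly

/-! ### Piecewise selection lemma -/

section Selection
open Polynomial

lemma piecewise_selection {N : ℕ} (f : ℝ → ℝ) {a b : ℝ} (hab : a < b)
    (p : Fin N → Polynomial ℝ) (hf : ContinuousOn f (Set.Icc a b))
    (hsel : ∀ t ∈ Set.Icc a b, ∃ j, f t = (p j).eval t) (deg : ℕ)
    (hdeg : ∀ j, (p j).natDegree ≤ deg) :
    ∃ (m : ℕ) (I : Fin m → Set ℝ) (q : Fin m → Polynomial ℝ),
      (∀ i, (I i).OrdConnected) ∧
      (∀ i j, i ≠ j → Disjoint (I i) (I j)) ∧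
      (⋃ i, I i) = Set.Icc a b ∧
      (∀ i, (q i).natDegree ≤ deg) ∧
      (∀ i, ∀ t ∈ I i, f t = (q i).eval t) := by
  classical
  set R : Finset ℝ := insert a (insert b (Finset.univ.biUnion (fun jj : Fin N × Fin N =>
    if h : p jj.1 - p jj.2 = 0 then ∅
    else ((p jj.1 - p jj.2).roots.toFinset.filter (fun t => t ∈ Set.Icc a b))))) with hRdef
  have haR : a ∈ R := Finset.mem_insert_self _ _
  have hbR : b ∈ R := Finset.mem_insert_of_mem (Finset.mem_insert_self _ _)
  have hRsub : ∀ r ∈ R, r ∈ Set.Icc a b := by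
    intro r hr
    rw [hRdef] at hr
    rcases Finset.mem_insert.1 hr with h | h
    · rw [h]; exact Set.left_mem_Icc.2 hab.le
    rcases Finset.mem_insert.1 h with h | h
    · rw [h]; exact Set.right_mem_Icc.2 hab.le
    obtain ⟨jj, _, hmem⟩ := Finset.mem_biUnion.1 h
    by_cases hz : p jj.1 - p jj.2 = 0
    · rw [dif_pos hz] at hmem; exact absurd hmem (Finset.notMem_empty r)
    · rw [dif_neg hz] at hmem
      exact (Finset.mem_filter.1 hmem).2
  have hsep : ∀ t ∈ Set.Icc a b, t ∉ R → ∀ j j' : Fin N,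
      (p j).eval t = (p j').eval t → p j = p j' := by
    intro t ht htR j j' heval
    by_contra hne
    have hz : p j - p j' ≠ 0 := sub_ne_zero.2 hne
    have hroot : t ∈ (p j - p j').roots := by
      rw [Polynomial.mem_roots hz]
      unfold Polynomial.IsRoot
      rw [Polynomial.eval_sub]
      linarith
    have : t ∈ R := by
      rw [hRdef]
      refine Finset.mem_insert_of_mem (Finset.mem_insert_of_mem (Finset.mem_biUnion.2
        ⟨(j, j'), Finset.mem_univ _, ?_⟩))
      rw [dif_neg hz]
      exact Finset.mem_filter.2 ⟨Multiset.mem_toFinset.2 hroot, ht⟩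
    exact htR this
  -- the gap structure
  have hfilne : ∀ r : {x // x ∈ R.erase b}, (R.filter (fun z => r.1 < z)).Nonempty := by
    rintro ⟨r, hr⟩
    have hrR : r ∈ R := Finset.mem_of_mem_erase hr
    have hrb : r ≠ b := Finset.ne_of_mem_erase hr
    have : r < b := lt_of_le_of_ne (hRsub r hrR).2 hrb
    exact ⟨b, Finset.mem_filter.2 ⟨hbR, this⟩⟩
  set next : {x // x ∈ R.erase b} → ℝ :=
    fun r => (R.filter (fun z => r.1 < z)).min' (hfilne r) with hnext
  have hnext_mem : ∀ r, next r ∈ R.filter (fun z => r.1 < z) :=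
    fun r => Finset.min'_mem _ _
  have hnext_R : ∀ r, next r ∈ R := fun r => (Finset.mem_filter.1 (hnext_mem r)).1
  have hnext_gt : ∀ r, r.1 < next r := fun r => (Finset.mem_filter.1 (hnext_mem r)).2
  have hnext_le : ∀ r, ∀ z ∈ R, r.1 < z → next r ≤ z := by
    intro r z hz hlt
    exact Finset.min'_le _ _ (Finset.mem_filter.2 ⟨hz, hlt⟩)
  have hgap_noR : ∀ r, ∀ z ∈ R, z ∉ Set.Ioo r.1 (next r) := by
    intro r z hz hmem
    exact absurd (hnext_le r z hz hmem.1) (not_le.2 hmem.2)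
  have hgap_sub : ∀ r, Set.Ioo r.1 (next r) ⊆ Set.Icc a b := by
    intro r t ht
    have h1 : a ≤ r.1 := (hRsub r.1 (Finset.mem_of_mem_erase r.2)).1
    have h2 : next r ≤ b := (hRsub _ (hnext_R r)).2
    exact ⟨le_trans h1 ht.1.le, le_trans ht.2.le h2⟩
  -- on each gap, f coincides with a single polynomial
  have gap_ex : ∀ r : {x // x ∈ R.erase b},
      ∃ j, ∀ t ∈ Set.Ioo r.1 (next r), f t = (p j).eval t := by
    intro r
    set s1 : ℝ := r.1
    set s2 : ℝ := next r
    have hlt : s1 < s2 := hnext_gt r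
    have ht₀ : ((s1 + s2) / 2) ∈ Set.Ioo s1 s2 := ⟨by linarith, by linarith⟩
    obtain ⟨j₀, hj₀⟩ := hsel _ (hgap_sub r ht₀)
    refine ⟨j₀, ?_⟩
    haveI : PreconnectedSpace (Set.Ioo s1 s2) := Subtype.preconnectedSpace isPreconnected_Ioo
    set E : Set (Set.Ioo s1 s2) := {t | f t.1 = (p j₀).eval t.1} with hE
    have hfX : Continuous (fun t : Set.Ioo s1 s2 => f t.1) :=
      continuousOn_iff_continuous_restrict.1 (hf.mono (hgap_sub r))
    have hEclosed : IsClosed E :=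
      isClosed_eq hfX ((Polynomial.continuous (p j₀)).comp continuous_subtype_val)
    have hEcobs : Eᶜ = ⋃ j : Fin N,
        {t : Set.Ioo s1 s2 | p j ≠ p j₀ ∧ f t.1 = (p j).eval t.1} := by
      ext t
      constructor
      · intro htc
        have htne : f t.1 ≠ (p j₀).eval t.1 := htc
        obtain ⟨j, hj⟩ := hsel t.1 (hgap_sub r t.2)
        refine Set.mem_iUnion.2 ⟨j, ⟨?_, hj⟩⟩
        intro hjj
        rw [hjj] at hj
        exact htne hj
      · intro htm
        obtain ⟨j, hjne, hjeq⟩ := Set.mem_iUnion.1 htm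
        intro hteq
        have hteq' : f t.1 = (p j₀).eval t.1 := hteq
        have : (p j).eval t.1 = (p j₀).eval t.1 := by rw [← hjeq, hteq']
        exact hjne (hsep t.1 (hgap_sub r t.2)
          (fun hmem => hgap_noR r t.1 hmem t.2) j j₀ this)
    have hEopen : IsOpen E := by
      have hcl : IsClosed (⋃ j : Fin N,
          {t : Set.Ioo s1 s2 | p j ≠ p j₀ ∧ f t.1 = (p j).eval t.1}) := by
        refine isClosed_iUnion_of_finite (fun j => ?_)
        by_cases hjj : p j = p j₀
        · have hempty : {t : Set.Ioo s1 s2 | p j ≠ p j₀ ∧ f t.1 = (p j).eval t.1} = ∅ := by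
            ext t; simp [hjj]
          rw [hempty]; exact isClosed_empty
        · have heqset : {t : Set.Ioo s1 s2 | p j ≠ p j₀ ∧ f t.1 = (p j).eval t.1}
              = {t : Set.Ioo s1 s2 | f t.1 = (p j).eval t.1} := by
            ext t; simp [hjj]
          rw [heqset]
          exact isClosed_eq hfX ((Polynomial.continuous (p j)).comp continuous_subtype_val)
      rw [← compl_compl E, hEcobs]
      exact hcl.isOpen_compl
    have hEne : E.Nonempty := ⟨⟨(s1 + s2) / 2, ht₀⟩, hj₀⟩
    have hEuniv : E = Set.univ := IsClopen.eq_univ ⟨hEclosed, hEopen⟩ hEne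
    intro t ht
    have : (⟨t, ht⟩ : Set.Ioo s1 s2) ∈ E := by rw [hEuniv]; exact Set.mem_univ _
    exact this
  -- assemble the partition
  set piece : {x // x ∈ R} ⊕ {x // x ∈ R.erase b} → Set ℝ :=
    Sum.elim (fun r => ({r.1} : Set ℝ)) (fun r => Set.Ioo r.1 (next r)) with hpiece
  set qpoly : {x // x ∈ R} ⊕ {x // x ∈ R.erase b} → Polynomial ℝ :=
    Sum.elim (fun r => Polynomial.C (f r.1)) (fun r => p (Classical.choose (gap_ex r)))
      with hqpoly
  have piece_ord : ∀ s, (piece s).OrdConnected := by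
    rintro (r | r) <;> rw [hpiece]
    · simp only [Sum.elim_inl]; exact Set.ordConnected_singleton
    · simp only [Sum.elim_inr]; exact Set.ordConnected_Ioo
  have piece_disj : ∀ s s', s ≠ s' → Disjoint (piece s) (piece s') := by
    rintro (r | r) (r' | r') hne <;> rw [hpiece] <;>
      simp only [Sum.elim_inl, Sum.elim_inr]
    · refine Set.disjoint_singleton.2 ?_
      intro h
      exact hne (congrArg Sum.inl (Subtype.ext h))
    · rw [Set.disjoint_left]
      intro z hz1 hz2
      rw [Set.mem_singleton_iff] at hz1
      subst hz1
      exact hgap_noR r' _ r.2 hz2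
    · rw [Set.disjoint_right]
      intro z hz1 hz2
      rw [Set.mem_singleton_iff] at hz1
      subst hz1
      exact hgap_noR r _ r'.2 hz2
    · have hrr : r.1 ≠ r'.1 := by
        intro h
        exact hne (congrArg Sum.inr (Subtype.ext h))
      rcases lt_or_gt_of_ne hrr with hlt | hlt
      · have h1 : next r ≤ r'.1 := hnext_le r r'.1 (Finset.mem_of_mem_erase r'.2) hlt
        rw [Set.disjoint_left]
        intro z hz1 hz2
        have : z < z := lt_trans (lt_of_lt_of_le hz1.2 h1) hz2.1
        exact absurd this (lt_irrefl z)
      · have h1 : next r' ≤ r.1 := hnext_le r' r.1 (Finset.mem_of_mem_erase r.2) hlt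
        rw [Set.disjoint_left]
        intro z hz1 hz2
        have : z < z := lt_trans (lt_of_lt_of_le hz2.2 h1) hz1.1
        exact absurd this (lt_irrefl z)
  have piece_cover : (⋃ s, piece s) = Set.Icc a b := by
    ext t
    constructor
    · intro ht
      obtain ⟨s, hs⟩ := Set.mem_iUnion.1 ht
      rcases s with r | r <;> rw [hpiece] at hs
      · simp only [Sum.elim_inl] at hs
        rw [Set.mem_singleton_iff.1 hs]
        exact hRsub _ r.2
      · simp only [Sum.elim_inr] at hs
        exact hgap_sub r hs
    · intro ht
      by_cases htR : t ∈ R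
      · refine Set.mem_iUnion.2 ⟨Sum.inl ⟨t, htR⟩, ?_⟩
        rw [hpiece]
        simp
      · have hta : a < t := lt_of_le_of_ne ht.1 (fun h => htR (h ▸ haR))
        set Rlt := R.filter (fun z => z < t) with hRlt
        have hRltne : Rlt.Nonempty := ⟨a, Finset.mem_filter.2 ⟨haR, hta⟩⟩
        set rm : ℝ := Rlt.max' hRltne with hrm
        have hrmR : rm ∈ R := (Finset.mem_filter.1 (Rlt.max'_mem hRltne)).1
        have hrmlt : rm < t := (Finset.mem_filter.1 (Rlt.max'_mem hRltne)).2
        have hrmb : rm ≠ b := by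
          intro h
          rw [h] at hrmlt
          exact absurd ht.2 (not_le.2 hrmlt)
        have hrme : rm ∈ R.erase b := Finset.mem_erase.2 ⟨hrmb, hrmR⟩
        refine Set.mem_iUnion.2 ⟨Sum.inr ⟨rm, hrme⟩, ?_⟩
        rw [hpiece]
        simp only [Sum.elim_inr]
        refine ⟨hrmlt, ?_⟩
        by_contra hle
        push_neg at hle
        have hnr : next ⟨rm, hrme⟩ ∈ R := hnext_R _
        have hnt : next ⟨rm, hrme⟩ ≠ t := fun h => htR (h ▸ hnr)
        have hlt' : next ⟨rm, hrme⟩ < t := lt_of_le_of_ne hle hnt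
        have hmem' : next ⟨rm, hrme⟩ ∈ Rlt := Finset.mem_filter.2 ⟨hnr, hlt'⟩
        have := Rlt.le_max' _ hmem'
        rw [← hrm] at this
        exact absurd (hnext_gt ⟨rm, hrme⟩) (not_lt.2 this)
  have qdeg : ∀ s, (qpoly s).natDegree ≤ deg := by
    rintro (r | r) <;> rw [hqpoly]
    · simp only [Sum.elim_inl]
      rw [natDegree_C]; exact Nat.zero_le _
    · simp only [Sum.elim_inr]
      exact hdeg _
  have qval : ∀ s, ∀ t ∈ piece s, f t = (qpoly s).eval t := by
    rintro (r | r) t ht <;> rw [hpiece] at ht <;> rw [hqpoly]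
    · simp only [Sum.elim_inl] at ht ⊢
      rw [Set.mem_singleton_iff.1 ht]
      simp
    · simp only [Sum.elim_inr] at ht ⊢
      exact Classical.choose_spec (gap_ex r) t ht
  set eqv : Fin (Fintype.card ({x // x ∈ R} ⊕ {x // x ∈ R.erase b}))
      ≃ ({x // x ∈ R} ⊕ {x // x ∈ R.erase b}) :=
    (Fintype.equivFin _).symm with heqv
  refine ⟨_, fun i => piece (eqv i), fun i => qpoly (eqv i), ?_, ?_, ?_, ?_, ?_⟩
  · intro i; exact piece_ord _
  · intro i j hij
    exact piece_disj _ _ (fun h => hij (eqv.injective h))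
  · rw [← piece_cover]
    ext t
    simp only [Set.mem_iUnion]
    constructor
    · rintro ⟨i, hi⟩; exact ⟨eqv i, hi⟩
    · rintro ⟨s, hs⟩; exact ⟨eqv.symm s, by rwa [Equiv.apply_symm_apply]⟩
  · intro i; exact qdeg _
  · intro i t ht; exact qval _ t ht
end Selection

/-- the local part of n isotropic ε-PRBs, as a function of ε on `[0,1/4]`,
is continuous and piecewise polynomial of degree at most n on a finite partition of the
domain into intervals. -/
theorem stmt12 (n : ℕ) (hn : 1 ≤ n) :
    ContinuousOn (fun ε : ℝ => localPart (isoPRB n ε)) (Set.Icc 0 (1 / 4)) ∧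
    ∃ (m : ℕ) (I : Fin m → Set ℝ) (q : Fin m → Polynomial ℝ),
      (∀ i, (I i).OrdConnected) ∧
      (∀ i j, i ≠ j → Disjoint (I i) (I j)) ∧
      (⋃ i, I i) = Set.Icc (0 : ℝ) (1 / 4) ∧
      (∀ i, (q i).natDegree ≤ n) ∧
      (∀ i, ∀ ε ∈ I i, localPart (isoPRB n ε) = (q i).eval ε) := by

  have hn' : 0 < n := hn
  have hcont := continuousOn_localPart_iso hn'
  refine ⟨hcont, ?_⟩
  obtain ⟨m₀, y, hy⟩ := lp_repr (Amat n) (fun _ => (1:ℝ))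
  set Q : Fin m₀ → Polynomial ℝ := fun j => ∑ k, Polynomial.C (y j k) * isoPolyK n k with hQ
  have hQdeg : ∀ j, (Q j).natDegree ≤ n := by
    intro j
    rw [hQ]
    refine Polynomial.natDegree_sum_le_of_forall_le _ _ (fun k _ => ?_)
    exact le_trans (Polynomial.natDegree_C_mul_le _ _) (isoPolyK_deg k)
  have hselect : ∀ t ∈ Set.Icc (0:ℝ) (1/4), ∃ j,
      localPart (isoPRB n t) = (Q j).eval t := by
    intro ε hε
    have hε1 : ε ≤ 1 := le_trans hε.2 (by norm_num)
    obtain ⟨j, hj⟩ := hy (bvec n ε) (feas_nonempty hε.1 hε1) (feas_compact hε.1 hε1)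
    refine ⟨j, ?_⟩
    have hval := localPart_eq_lp_value hε.1 hε1 hj
    rw [hval, hQ]
    rw [Polynomial.eval_finset_sum]
    refine Finset.sum_congr rfl (fun k _ => ?_)
    rw [Polynomial.eval_mul, Polynomial.eval_C, isoPolyK_eval]
  obtain ⟨m, I, q, h1, h2, h3, h4, h5⟩ := piecewise_selection
    (fun ε => localPart (isoPRB n ε)) (by norm_num : (0:ℝ) < 1/4) Q hcont hselect n hQdeg
  exact ⟨m, I, q, h1, h2, h3, h4, h5⟩
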